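/- Let (Ω,F,P) be a probability space, Y : ℕ → ℕ → Ω → ℝ a family of integrable random variables (potential outcomes), D : Ω → {0,1} measurable, and γ, T : Ω → ℕ measurable with T ≤ γ pointwise. Let 𝒢 = σ(γ) and ℋ = σ(D, T, γ), and assume the observed outcome Yobs(ω) := Y (D ω) (T ω) (ω) is measurable and integrable. Assume: (i) [randomization] for all d ∈ {0,1} and t ∈ ℕ, E[Y d t | ℋ] = E[Y d t | 𝒢] almost surely; (ii) [no interaction, A2] for all t ∈ ℕ, E[Y 1 t − Y 0 t | 𝒢] = E[Y 1 0 − Y 0 0 | 𝒢] almost everywhere on the event {t ≤ γ}; (iii) [linearity in t, A3] there is a 𝒢-measurable integrable random variable Λ such that for all d ∈ {0,1} and all t ≥ 1, E[Y d t − Y d (t−1) | 𝒢] = Λ almost everywhere on {t ≤ γ}. Then, almost surely, E[Yobs | ℋ] = E[Y 0 0 | 𝒢] + D · E[Y 1 0 − Y 0 0 | 𝒢] + T · Λ. -/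

import Mathlib

open MeasureTheory ProbabilityTheory

/-- Theorem 1: Under randomization (i), no interaction (ii) and
linearity in `t` (iii), the observed outcome satisfies, almost surely,
`E[Yobs | σ(D,T,γ)] = θ⁰⁰ + D·μᵈᵉ + T·Λ` where `θ⁰⁰ = E[Y 0 0 | σ(γ)]`,
`μᵈᵉ = E[Y 1 0 − Y 0 0 | σ(γ)]` and `Λ` is the conditional spillover effect. -/
theorem stmt4
    {Ω : Type*} [MeasurableSpace Ω] (P : Measure Ω) [IsProbabilityMeasure P]
    (Y : ℕ → ℕ → Ω → ℝ) (hYint : ∀ d t, Integrable (Y d t) P)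
    (D : Ω → ℕ) (hD01 : ∀ ω, D ω ≤ 1) (hDmeas : Measurable D)
    (γ T : Ω → ℕ) (hγmeas : Measurable γ) (hTmeas : Measurable T)
    (hTγ : ∀ ω, T ω ≤ γ ω)
    (Yobs : Ω → ℝ) (hYobs : ∀ ω, Yobs ω = Y (D ω) (T ω) ω)
    (hYobsmeas : Measurable Yobs) (hYobsint : Integrable Yobs P)
    -- (i) randomization
    (hrand : ∀ d ≤ 1, ∀ t : ℕ,
      (P[Y d t | MeasurableSpace.comap (fun ω => (D ω, T ω, γ ω)) inferInstance])
        =ᵐ[P] (P[Y d t | MeasurableSpace.comap γ inferInstance]))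
    -- (ii) no interaction between own treatment and others' treatments (A2)
    (hnoint : ∀ t : ℕ, ∀ᵐ ω ∂P, t ≤ γ ω →
      (P[fun ω' => Y 1 t ω' - Y 0 t ω' | MeasurableSpace.comap γ inferInstance]) ω
        = (P[fun ω' => Y 1 0 ω' - Y 0 0 ω' | MeasurableSpace.comap γ inferInstance]) ω)
    -- (iii) constant incremental spillover effect (A3)
    (Λ : Ω → ℝ)
    (hΛmeas : Measurable[MeasurableSpace.comap γ inferInstance] Λ)
    (hΛint : Integrable Λ P)
    (hlin : ∀ d ≤ 1, ∀ t : ℕ, 1 ≤ t → ∀ᵐ ω ∂P, t ≤ γ ω →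
      (P[fun ω' => Y d t ω' - Y d (t - 1) ω' | MeasurableSpace.comap γ inferInstance]) ω
        = Λ ω) :
    (P[Yobs | MeasurableSpace.comap (fun ω => (D ω, T ω, γ ω)) inferInstance])
      =ᵐ[P] fun ω =>
        (P[Y 0 0 | MeasurableSpace.comap γ inferInstance]) ω
        + (D ω : ℝ) *
          (P[fun ω' => Y 1 0 ω' - Y 0 0 ω' | MeasurableSpace.comap γ inferInstance]) ω
        + (T ω : ℝ) * Λ ω := by
  -- telescoping along t using (iii)
  have tele : ∀ d ≤ 1, ∀ t : ℕ, ∀ᵐ ω ∂P, t ≤ γ ω →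
      (P[Y d t | MeasurableSpace.comap γ inferInstance]) ω = (P[Y d 0 | MeasurableSpace.comap γ inferInstance]) ω + (t : ℝ) * Λ ω := by
    intro d hd t
    induction t with
    | zero => filter_upwards with ω _; simp
    | succ t ih =>
      have h1 := hlin d hd (t + 1) (by omega)
      have h2 : (P[fun ω' => Y d (t + 1) ω' - Y d (t + 1 - 1) ω' | MeasurableSpace.comap γ inferInstance])
          =ᵐ[P] (P[Y d (t + 1) | MeasurableSpace.comap γ inferInstance]) - (P[Y d t | MeasurableSpace.comap γ inferInstance]) :=
        condExp_sub (hYint d (t + 1)) (hYint d t) _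
      filter_upwards [h1, h2, ih] with ω h1 h2 ih hle
      have ht : t ≤ γ ω := Nat.le_of_succ_le hle
      have h3 := h1 hle
      rw [h2, Pi.sub_apply] at h3
      have h4 := ih ht
      push_cast
      linarith
  -- baseline in d using condexp_sub
  have base : ∀ d ≤ 1, ∀ᵐ ω ∂P,
      (P[Y d 0 | MeasurableSpace.comap γ inferInstance]) ω = (P[Y 0 0 | MeasurableSpace.comap γ inferInstance]) ω
        + (d : ℝ) * (P[fun ω' => Y 1 0 ω' - Y 0 0 ω' | MeasurableSpace.comap γ inferInstance]) ω := by
    intro d hd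
    interval_cases d
    · filter_upwards with ω; simp
    · have h2 : (P[fun ω' => Y 1 0 ω' - Y 0 0 ω' | MeasurableSpace.comap γ inferInstance])
          =ᵐ[P] (P[Y 1 0 | MeasurableSpace.comap γ inferInstance]) - (P[Y 0 0 | MeasurableSpace.comap γ inferInstance]) :=
        condExp_sub (hYint 1 0) (hYint 0 0) _
      filter_upwards [h2] with ω h2
      rw [h2, Pi.sub_apply]
      ring
  -- key pointwise identity on each event {D = d, T = t}
  have key : ∀ d t : ℕ, ∀ᵐ ω ∂P, D ω = d ∧ T ω = t →
      (P[Yobs | MeasurableSpace.comap (fun ω => (D ω, T ω, γ ω)) inferInstance]) ω = (P[Y 0 0 | MeasurableSpace.comap γ inferInstance]) ω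
        + (d : ℝ) * (P[fun ω' => Y 1 0 ω' - Y 0 0 ω' | MeasurableSpace.comap γ inferInstance]) ω + (t : ℝ) * Λ ω := by
    intro d t
    rcases Nat.lt_or_ge 1 d with hd | hd
    · filter_upwards with ω hω
      exact absurd (hω.1 ▸ hD01 ω) (by omega)
    · set s : Set Ω := {ω | D ω = d ∧ T ω = t} with hsdef
      have hs0 : MeasurableSet s := by
        have : s = D ⁻¹' {d} ∩ T ⁻¹' {t} := rfl
        rw [this]
        exact (hDmeas (measurableSet_singleton d)).inter
          (hTmeas (measurableSet_singleton t))
      have hsH : MeasurableSet[MeasurableSpace.comap (fun ω => (D ω, T ω, γ ω)) inferInstance] s := by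
        refine ⟨{p : ℕ × ℕ × ℕ | p.1 = d ∧ p.2.1 = t}, ?_, rfl⟩
        exact ((measurableSet_singleton d).preimage measurable_fst).inter
          ((measurableSet_singleton t).preimage (measurable_fst.comp measurable_snd))
      have hzero : (fun ω => Yobs ω - Y d t ω) =ᵐ[P.restrict s] 0 := by
        filter_upwards [ae_restrict_mem hs0] with ω hω
        obtain ⟨h1, h2⟩ := hω
        simp [hYobs, h1, h2]
      have hc := condExp_ae_eq_restrict_zero (m := MeasurableSpace.comap (fun ω => (D ω, T ω, γ ω)) inferInstance) hsH hzero
      have hsub : (P[fun ω => Yobs ω - Y d t ω | MeasurableSpace.comap (fun ω => (D ω, T ω, γ ω)) inferInstance])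
          =ᵐ[P] (P[Yobs | MeasurableSpace.comap (fun ω => (D ω, T ω, γ ω)) inferInstance]) - (P[Y d t | MeasurableSpace.comap (fun ω => (D ω, T ω, γ ω)) inferInstance]) :=
        condExp_sub hYobsint (hYint d t) _
      have hres : ∀ᵐ ω ∂(P.restrict s),
          (P[Yobs | MeasurableSpace.comap (fun ω => (D ω, T ω, γ ω)) inferInstance]) ω = (P[Y 0 0 | MeasurableSpace.comap γ inferInstance]) ω
            + (d : ℝ) * (P[fun ω' => Y 1 0 ω' - Y 0 0 ω' | MeasurableSpace.comap γ inferInstance]) ω + (t : ℝ) * Λ ω := by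
        filter_upwards [hc, ae_restrict_of_ae hsub, ae_restrict_of_ae (hrand d hd t),
          ae_restrict_of_ae (tele d hd t), ae_restrict_of_ae (base d hd),
          ae_restrict_mem hs0] with ω hc hsub hrand htele hbase hω
        obtain ⟨h1, h2⟩ := hω
        have htγ : t ≤ γ ω := h2 ▸ hTγ ω
        have e1 : (P[Yobs | MeasurableSpace.comap (fun ω => (D ω, T ω, γ ω)) inferInstance]) ω = (P[Y d t | MeasurableSpace.comap (fun ω => (D ω, T ω, γ ω)) inferInstance]) ω := by
          rw [hsub, Pi.sub_apply] at hc
          have : (0 : Ω → ℝ) ω = 0 := rfl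
          linarith [hc.trans this]
        rw [e1, hrand, htele htγ, hbase]
      have := (ae_restrict_iff' hs0).mp hres
      filter_upwards [this] with ω h hω
      exact h hω
  have key' := ae_all_iff.mpr fun d : ℕ => ae_all_iff.mpr fun t : ℕ => key d t
  filter_upwards [key'] with ω h
  exact h (D ω) (T ω) ⟨rfl, rfl⟩
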